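/- RODP-only plant: assume π⁻ ≤ α_r·πʷ ≤ π⁺ and fix the TDP output at w_h = 0. Then for every g, the point w_r = clamp(α_r·g, w̲_r, w̄_r) maximizes the profit over the RODP range: for all w_r ∈ [w̲_r, w̄_r], Π(0, w_r, g) ≤ Π(0, clamp(α_r·g, w̲_r, w̄_r), g). -/
import Mathlib


open Set

noncomputable section

/-- Net electricity exchange. -/
def netz (αr ηh wh wr g : ℝ) : ℝ := wr / αr - wh / ηh - g

/-- Electricity payment under net metering. -/
def epay (πp πm π0 αr ηh wh wr g : ℝ) : ℝ :=
  πp * max (netz αr ηh wh wr g) 0 + πm * min (netz αr ηh wh wr g) 0 + π0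

/-- WDP profit. -/
def profit (πw πp πm π0 αr αh ηh : ℝ) (C : ℝ → ℝ) (wh wr g : ℝ) : ℝ :=
  πw * (wh + wr) - epay πp πm π0 αr ηh wh wr g - C (wh / αh)

/-- clamp(x, a, b) = max(a, min(x, b)). -/
def clampR (x a b : ℝ) : ℝ := max a (min x b)

/-- Value function: sup of profit over the feasible rectangle. -/
def Pstar (πw πp πm π0 αr αh ηh : ℝ) (C : ℝ → ℝ) (wlh wuh wlr wur g : ℝ) : ℝ :=
  sSup ((fun p : ℝ × ℝ => profit πw πp πm π0 αr αh ηh C p.1 p.2 g) ''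
    (Icc wlh wuh ×ˢ Icc wlr wur))

/-- RODP-only plant (w_h = 0): clamp(α_r·g) is optimal. -/
theorem rodp_only_dispatch
    (πp πm π0 πw αh ηh αr wlh wuh wlr wur : ℝ) (C : ℝ → ℝ)
    (hπ : πm ≤ πp) (hπm : 0 ≤ πm) (hπw : 0 ≤ πw)
    (hαh : 0 < αh) (hηh : 0 < ηh) (hαr : 0 < αr)
    (hwlh : 0 ≤ wlh) (hwhb : wlh ≤ wuh) (hwlr : 0 ≤ wlr) (hwrb : wlr ≤ wur)
    (hC : StrictConvexOn ℝ univ C) (hCd : Differentiable ℝ C) (hCm : Monotone C)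
    (hmid1 : πm ≤ αr * πw) (hmid2 : αr * πw ≤ πp) :
    ∀ g : ℝ, ∀ wr ∈ Icc wlr wur,
      profit πw πp πm π0 αr αh ηh C 0 wr g ≤
        profit πw πp πm π0 αr αh ηh C 0 (clampR (αr * g) wlr wur) g := by
  intro g wr hwr
  obtain ⟨h1, h2⟩ := hwr
  -- sign helpers
  have hz : ∀ x : ℝ, αr * g ≤ x → 0 ≤ netz αr ηh 0 x g := by
    intro x hx
    have : g ≤ x / αr := (le_div_iff₀ hαr).2 (by linarith)
    simp [netz]
    linarith
  have hz' : ∀ x : ℝ, x ≤ αr * g → netz αr ηh 0 x g ≤ 0 := by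
    intro x hx
    have : x / αr ≤ g := (div_le_iff₀ hαr).2 (by linarith)
    simp [netz]
    linarith
  -- decreasing to the right of αr*g
  have key : ∀ x y : ℝ, x ≤ y → αr * g ≤ x →
      profit πw πp πm π0 αr αh ηh C 0 y g ≤ profit πw πp πm π0 αr αh ηh C 0 x g := by
    intro x y hxy hx
    have hzx := hz x hx
    have hzy := hz y (hx.trans hxy)
    have h3 : πw * (y - x) * αr ≤ πp * (y - x) :=
      by nlinarith [mul_nonneg (sub_nonneg.2 hxy) (sub_nonneg.2 hmid2)]
    have h4 : πw * (y - x) ≤ πp * (y - x) / αr := (le_div_iff₀ hαr).2 h3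
    have hid : πp * (y - x) / αr =
        πp * (netz αr ηh 0 y g) - πp * (netz αr ηh 0 x g) := by
      simp only [netz]; ring
    simp only [profit, epay, max_eq_left hzx, max_eq_left hzy,
      min_eq_right hzx, min_eq_right hzy]
    linarith
  -- increasing to the left of αr*g
  have key2 : ∀ x y : ℝ, x ≤ y → y ≤ αr * g →
      profit πw πp πm π0 αr αh ηh C 0 x g ≤ profit πw πp πm π0 αr αh ηh C 0 y g := by
    intro x y hxy hy
    have hzx := hz' x (hxy.trans hy)
    have hzy := hz' y hy
    have h3 : πm * (y - x) ≤ πw * (y - x) * αr :=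
      by nlinarith [mul_nonneg (sub_nonneg.2 hxy) (sub_nonneg.2 hmid1)]
    have h4 : πm * (y - x) / αr ≤ πw * (y - x) := (div_le_iff₀ hαr).2 h3
    have hid : πm * (y - x) / αr =
        πm * (netz αr ηh 0 y g) - πm * (netz αr ηh 0 x g) := by
      simp only [netz]; ring
    simp only [profit, epay, max_eq_right hzx, max_eq_right hzy,
      min_eq_left hzx, min_eq_left hzy]
    linarith
  rcases le_total (αr * g) wlr with hA | hA
  · have hc : clampR (αr * g) wlr wur = wlr := by
      rw [clampR, min_eq_left (hA.trans hwrb), max_eq_left hA]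
    rw [hc]; exact key wlr wr h1 hA
  · rcases le_total wur (αr * g) with hB | hB
    · have hc : clampR (αr * g) wlr wur = wur := by
        rw [clampR, min_eq_right hB, max_eq_right hwrb]
      rw [hc]; exact key2 wr wur h2 hB
    · have hc : clampR (αr * g) wlr wur = αr * g := by
        rw [clampR, min_eq_left hB, max_eq_right hA]
      rw [hc]
      rcases le_total wr (αr * g) with hD | hD
      · exact key2 wr (αr * g) hD le_rfl
      · exact key (αr * g) wr hD le_rfl
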